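/- The subset S = { (y, g) ∈ Z_2^n × F_n : g = 0, y ≠ 0 } is shattered by EE_n viewed as a function of Alice's input: for every R ⊆ S there exists (x, f) ∈ Z_2^n × F_n such that EE_n(x, f, y, g) = 1 for all (y,g) ∈ R and EE_n(x, f, y, g) = 0 for all (y,g) ∈ S \ R. -/
import Mathlib


/-- Binary vectors of length `n` over `Z_2`. -/
abbrev V2 (n : ℕ) := Fin n → ZMod 2

/-- The Exchange Evaluation game: `EE_n(x,f,y,g) = f(y) ⊕ g(x)`. -/
def EE {n : ℕ} (x : V2 n) (f : V2 n → ZMod 2) (y : V2 n) (g : V2 n → ZMod 2) : ZMod 2 :=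
  f y + g x

/-- The set `S = {(y, g) : g = 0, y ≠ 0}` is shattered by `EE_n` (viewed as a
function of Alice's input `(x, f) ∈ Z_2^n × F_n`). -/
theorem stmt13 (n : ℕ)
    (S : Set (V2 n × (V2 n → ZMod 2)))
    (hS : S = {p | p.2 = 0 ∧ p.1 ≠ 0})
    (R : Set (V2 n × (V2 n → ZMod 2))) (hR : R ⊆ S) :
    ∃ (x : V2 n) (f : V2 n → ZMod 2), f 0 = 0 ∧
      (∀ p ∈ R, EE x f p.1 p.2 = 1) ∧
      (∀ p ∈ S \ R, EE x f p.1 p.2 = 0) := by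
  classical
  refine ⟨0, fun y => if (y, 0) ∈ R then 1 else 0, ?_, ?_, ?_⟩
  · show (if ((0:V2 n), (0:V2 n → ZMod 2)) ∈ R then (1:ZMod 2) else 0) = 0
    rw [if_neg]
    intro h
    exact (hS ▸ hR h).2 rfl
  · intro p hp
    have h2 : p.2 = 0 := (hS ▸ hR hp).1
    have : (p.1, (0 : V2 n → ZMod 2)) ∈ R := by
      rwa [← h2, Prod.mk.eta]
    simp [EE, this, h2]
  · intro p hp
    have h2 : p.2 = 0 := (hS ▸ hp.1).1
    have : (p.1, (0 : V2 n → ZMod 2)) ∉ R := by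
      rw [← h2, Prod.mk.eta]; exact hp.2
    simp [EE, this, h2]
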